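/- Let F be a field of characteristic zero, A = F[x,y], n > 1, and d²(a,b) = y^{n-1}(∂a/∂x + y·∂b/∂y) − (n−1)·y^{n-1}·b. Then the quotient A/Im(d²) is isomorphic as an F-vector space to ⊕_{i=0}^{n-2} y^i F[x]; i.e., the second logarithmic Poisson cohomology group H² ≅ ⊕_{i=0}^{n-2} y^i F[x], which is infinite-dimensional over F and nonzero for n > 1. -/

import Mathlib

open MvPolynomial

noncomputable section

abbrev PolyA (F : Type*) [Field F] := MvPolynomial (Fin 2) F

/-- `d²(a,b) = y^{n-1}(∂a/∂x + y·∂b/∂y) − (n−1)·y^{n-1}·b` as an `F`-linear map. -/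
def d2l (F : Type*) [Field F] (n : ℕ) : PolyA F × PolyA F →ₗ[F] PolyA F :=
  (LinearMap.mulLeft F ((X 1 : PolyA F) ^ (n - 1))).comp
    ((pderiv 0).toLinearMap.comp (LinearMap.fst F (PolyA F) (PolyA F)) +
      (LinearMap.mulLeft F (X 1 : PolyA F)).comp
        ((pderiv 1).toLinearMap.comp (LinearMap.snd F (PolyA F) (PolyA F))) -
      ((n : F) - 1) • LinearMap.snd F (PolyA F) (PolyA F))

/-- `⊕_{i=0}^{n-2} y^i F[x]`, the subspace of polynomials of `y`-degree at most `n−2`. -/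
def lowY (F : Type*) [Field F] (n : ℕ) : Submodule F (PolyA F) :=
  Submodule.span F
    ((fun q : ℕ × ℕ => (X 0 : PolyA F) ^ q.1 * X 1 ^ q.2) '' {q | q.2 ≤ n - 2})

section aux
variable (F : Type*) [Field F]

lemma mono_eq (d : Fin 2 →₀ ℕ) :
    (monomial d (1 : F) : PolyA F) = X 0 ^ (d 0) * X 1 ^ (d 1) := by
  have hd : d = Finsupp.single 0 (d 0) + Finsupp.single 1 (d 1) := by
    ext a; fin_cases a <;> simp
  rw [X_pow_eq_monomial, X_pow_eq_monomial, monomial_mul, one_mul, ← hd]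

lemma single_eq_mono (d : Fin 2 →₀ ℕ) :
    (monomial d (1 : F) : PolyA F) = monomial d (1 : F) := rfl

lemma lowY_eq (n : ℕ) :
    lowY F n = restrictSupport F {d : Fin 2 →₀ ℕ | d 1 ≤ n - 2} := by
  rw [restrictSupport_eq_span, lowY]
  congr 1
  ext p
  constructor
  · rintro ⟨⟨a, b⟩, hb, rfl⟩
    refine ⟨Finsupp.single 0 a + Finsupp.single 1 b, by simpa using hb, ?_⟩
    show (monomial _ (1:F) : PolyA F) = _
    rw [single_eq_mono, mono_eq]; simp
  · rintro ⟨d, hd, rfl⟩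
    refine ⟨(d 0, d 1), hd, ?_⟩
    show _ = (monomial _ (1:F) : PolyA F)
    rw [single_eq_mono, mono_eq]
end aux

section aux2
variable (F : Type*) [Field F]

lemma hi_mem (k : ℕ) (p : PolyA F) :
    (X 1 : PolyA F) ^ k * p ∈ restrictSupport F {d : Fin 2 →₀ ℕ | k ≤ d 1} := by
  induction p using MvPolynomial.induction_on' with
  | monomial d a =>
    rw [X_pow_eq_monomial, monomial_mul, one_mul, mem_restrictSupport_iff]
    intro e he
    have he' : e = Finsupp.single 1 k + d := by
      simpa using support_monomial_subset he
    subst he'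
    simp [Finsupp.add_apply]
  | add p q hp hq => rw [mul_add]; exact add_mem hp hq

lemma range_d2l [CharZero F] (n : ℕ) (hn : 1 < n) :
    LinearMap.range (d2l F n) =
      restrictSupport F {d : Fin 2 →₀ ℕ | n - 1 ≤ d 1} := by
  apply le_antisymm
  · rintro _ ⟨⟨a, b⟩, rfl⟩
    exact hi_mem F (n - 1) _
  · rw [restrictSupport_eq_span, Submodule.span_le]
    rintro _ ⟨d, hd, rfl⟩
    have hd : n - 1 ≤ d 1 := hd
    have hne : ((d 0 : F) + 1) ≠ 0 := by
      exact_mod_cast (Nat.cast_add_one_ne_zero (R := F) (d 0))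
    have h1 : pderiv 0 ((X 1 : PolyA F) ^ (d 1 - (n-1))) = 0 := by
      rw [pderiv_pow]; simp [pderiv_X]
    have h2 : pderiv 0 ((X 0 : PolyA F) ^ (d 0 + 1)) =
        ((d 0 : F) + 1) • X 0 ^ (d 0) := by
      rw [pderiv_pow, pderiv_X_self, mul_one, Nat.add_sub_cancel, smul_eq_C_mul,
        show ((d 0 : F) + 1) = ((d 0 + 1 : ℕ) : F) by push_cast; ring, C_eq_coe_nat]
    refine ⟨((((d 0 : F)) + 1)⁻¹ •
      ((X 0 : PolyA F) ^ (d 0 + 1) * X 1 ^ (d 1 - (n - 1))), 0), ?_⟩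
    show (X 1 : PolyA F) ^ (n-1) *
      (pderiv 0 (((((d 0 : F)) + 1)⁻¹ •
        ((X 0 : PolyA F) ^ (d 0 + 1) * X 1 ^ (d 1 - (n - 1))))) +
       X 1 * pderiv 1 (0 : PolyA F) - ((n : F) - 1) • (0 : PolyA F)) = _
    rw [show pderiv (1 : Fin 2) (0 : PolyA F) = 0 from map_zero _, mul_zero, add_zero, smul_zero, sub_zero, Derivation.map_smul,
      pderiv_mul, h1, mul_zero, add_zero, h2, smul_mul_assoc, smul_smul,
      inv_mul_cancel₀ hne, one_smul]
    show _ = (monomial d (1:F) : PolyA F)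
    rw [single_eq_mono, mono_eq]
    ring_nf
    rw [← pow_add]
    congr 2
    omega
end aux2

/-- `H² = A/Im(d²) ≅ ⊕_{i=0}^{n-2} y^i F[x]`, which is infinite-dimensional over `F`
and nonzero for `n > 1`. -/
theorem stmt17 (F : Type*) [Field F] [CharZero F] (n : ℕ) (hn : 1 < n) :
    Nonempty ((PolyA F ⧸ LinearMap.range (d2l F n)) ≃ₗ[F] ↥(lowY F n)) ∧
      ¬ Module.Finite F (PolyA F ⧸ LinearMap.range (d2l F n)) ∧
      Nontrivial (PolyA F ⧸ LinearMap.range (d2l F n)) := by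
  have hset : {d : Fin 2 →₀ ℕ | n - 1 ≤ d 1} = {d : Fin 2 →₀ ℕ | d 1 ≤ n - 2}ᶜ := by
    ext d; simp only [Set.mem_setOf_eq, Set.mem_compl_iff, not_le]; omega
  have hcompl : IsCompl (LinearMap.range (d2l F n)) (lowY F n) := by
    rw [range_d2l F n hn, lowY_eq, hset]
    constructor
    · rw [restrictSupport, restrictSupport, AddMonoidAlgebra.supported_eq_map,
        AddMonoidAlgebra.supported_eq_map]
      exact (Finsupp.disjoint_supported_supported disjoint_compl_left).map_orderIso
        (Submodule.orderIsoMapComap _)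
    · rw [restrictSupport, restrictSupport, AddMonoidAlgebra.supported_eq_map,
        AddMonoidAlgebra.supported_eq_map]
      have hc : Codisjoint (Finsupp.supported F F {d : Fin 2 →₀ ℕ | d 1 ≤ n - 2}ᶜ)
          (Finsupp.supported F F {d : Fin 2 →₀ ℕ | d 1 ≤ n - 2}) := by
        rw [codisjoint_iff, ← Finsupp.supported_union, Set.compl_union_self]
        exact Finsupp.supported_univ
      rw [codisjoint_iff, ← Submodule.map_sup, codisjoint_iff.mp hc, Submodule.map_top]
      exact LinearEquiv.range _
  refine ⟨⟨Submodule.quotientEquivOfIsCompl _ _ hcompl⟩, ?_, ?_⟩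
  · intro hF
    let φ := (aeval (R := F) ![Polynomial.X, (0 : Polynomial F)]).toLinearMap
    have hker : LinearMap.range (d2l F n) ≤ LinearMap.ker φ := by
      rintro _ ⟨⟨a, b⟩, rfl⟩
      rw [LinearMap.mem_ker]
      simp only [φ, d2l, AlgHom.toLinearMap_apply, LinearMap.comp_apply, LinearMap.mulLeft_apply]
      rw [map_mul, map_pow, aeval_X]
      simp [zero_pow (by omega : n - 1 ≠ 0)]
    let ψ := Submodule.liftQ _ φ hker
    have hsurj : Function.Surjective ψ := by
      intro q
      refine ⟨Submodule.Quotient.mk (Polynomial.aeval (X 0 : PolyA F) q), ?_⟩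
      show φ (Polynomial.aeval (X 0 : PolyA F) q) = q
      show aeval ![Polynomial.X, (0 : Polynomial F)] (Polynomial.aeval (X 0 : PolyA F) q) = q
      rw [← Polynomial.aeval_algHom_apply, aeval_X]
      simp
    exact Polynomial.not_finite (Module.Finite.of_surjective ψ hsurj)
  · have h1 : (1 : PolyA F) ∈ lowY F n :=
      Submodule.subset_span ⟨(0, 0), by simp, by simp⟩
    have hnt : Nontrivial (lowY F n) := by
      refine nontrivial_of_ne ⟨1, h1⟩ 0 ?_
      intro h
      exact one_ne_zero (congrArg Subtype.val h)
    exact (Submodule.quotientEquivOfIsCompl _ _ hcompl).toEquiv.nontrivial
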